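/- Tomkinson's theorem: if {a_i G_i}_{i=1}^k is a minimal cover of a group G by left cosets of subgroups G_1,…,G_k (i.e., the cosets cover G but no proper subsystem does), then [G : ⋂_{i=1}^k G_i] ≤ k!. -/

import Mathlib

open Pointwise in
/-- Key step: for a nonempty set `S` of indices, some `i₀ ∈ S` has
`(H i₀).relIndex (⨅ j ∈ Sᶜ, H j)` positive and at most `S.card`. -/
theorem tomkinson_step {G : Type*} [Group G] {k : ℕ}
    (a : Fin k → G) (H : Fin k → Subgroup G)
    (hcover : ∀ x : G, ∃ i, x ∈ a i • (H i : Set G))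
    (hmin : ∀ j : Fin k, ∃ x : G, ∀ i, i ≠ j → x ∉ a i • (H i : Set G))
    (S : Finset (Fin k)) (hS : S.Nonempty) :
    ∃ i₀ ∈ S, (H i₀).relIndex (⨅ j ∈ (Sᶜ : Finset (Fin k)), H j) ≠ 0 ∧
      (H i₀).relIndex (⨅ j ∈ (Sᶜ : Finset (Fin k)), H j) ≤ S.card := by
  classical
  set D : Subgroup G := ⨅ j ∈ (Sᶜ : Finset (Fin k)), H j with hD
  obtain ⟨istar, histar⟩ := hS
  obtain ⟨x, hx⟩ := hmin istar
  -- the coset `x • D` is covered by the cosets with indices in `S`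
  have hDle : ∀ i ∉ S, D ≤ H i := by
    intro i hi
    exact biInf_le _ (Finset.mem_compl.mpr hi)
  have hcovS : ∀ d : G, d ∈ D → ∃ i ∈ S, x * d ∈ a i • (H i : Set G) := by
    intro d hd
    obtain ⟨i, hi⟩ := hcover (x * d)
    refine ⟨i, ?_, hi⟩
    by_contra hiS
    -- then `D ≤ H i` and `x ∉ a i • H i`, contradiction
    have hine : i ≠ istar := fun h => hiS (h ▸ histar)
    apply hx i hine
    rw [mem_leftCoset_iff] at hi ⊢
    have hdHi : d ∈ H i := hDle i hiS hd
    have : (a i)⁻¹ * x = ((a i)⁻¹ * (x * d)) * d⁻¹ := by group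
    rw [this]
    exact (H i).mul_mem hi ((H i).inv_mem hdHi)
  -- build a genuine coset cover of the group `↥D`
  let z : Fin k → ↥D := fun i =>
    if h : ∃ d : ↥D, x * (d : G) ∈ a i • (H i : Set G) then h.choose else 1
  let K : Fin k → Subgroup ↥D := fun i => (H i).subgroupOf D
  have hcovD : ⋃ i ∈ S, (z i) • (K i : Set ↥D) = Set.univ := by
    apply Set.eq_univ_iff_forall.mpr
    intro d
    obtain ⟨i, hiS, hi⟩ := hcovS (d : G) d.2
    have hex : ∃ d' : ↥D, x * (d' : G) ∈ a i • (H i : Set G) := ⟨d, hi⟩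
    have hz : x * ((z i : ↥D) : G) ∈ a i • (H i : Set G) := by
      simp only [z, dif_pos hex]
      exact hex.choose_spec
    refine Set.mem_biUnion hiS ?_
    rw [mem_leftCoset_iff]
    have : ((z i)⁻¹ * d : ↥D) ∈ K i := by
      have h1 : (a i)⁻¹ * (x * ((z i : ↥D) : G)) ∈ H i := (mem_leftCoset_iff _).mp hz
      have h2 : (a i)⁻¹ * (x * (d : G)) ∈ H i := (mem_leftCoset_iff _).mp hi
      have h3 : (((z i)⁻¹ * d : ↥D) : G) ∈ H i := by
        have := (H i).mul_mem ((H i).inv_mem h1) h2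
        have heq : ((a i)⁻¹ * (x * ((z i : ↥D) : G)))⁻¹ * ((a i)⁻¹ * (x * (d : G)))
            = ((z i : ↥D) : G)⁻¹ * (d : G) := by group
        rw [heq] at this
        simpa using this
      simpa [K, Subgroup.mem_subgroupOf] using h3
    exact this
  obtain ⟨i₀, hi₀S, hfin, hle⟩ := Subgroup.exists_index_le_card_of_leftCoset_cover hcovD
  exact ⟨i₀, hi₀S, hfin.index_ne_zero, hle⟩

open Pointwise in
theorem stmt_16 (G : Type*) [Group G] (k : ℕ) (hk : 0 < k)
    (a : Fin k → G) (H : Fin k → Subgroup G)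
    (hcover : ∀ x : G, ∃ i, x ∈ a i • (H i : Set G))
    (hmin : ∀ j : Fin k, ∃ x : G, ∀ i, i ≠ j → x ∉ a i • (H i : Set G)) :
    (⨅ i, H i).index ≠ 0 ∧ (⨅ i, H i).index ≤ k.factorial := by
  classical
  have main : ∀ (n : ℕ) (S : Finset (Fin k)), S.card = n →
      (⨅ i, H i).relIndex (⨅ j ∈ (Sᶜ : Finset (Fin k)), H j) ≠ 0 ∧
      (⨅ i, H i).relIndex (⨅ j ∈ (Sᶜ : Finset (Fin k)), H j) ≤ n.factorial := by
    intro n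
    induction n with
    | zero =>
      intro S hS
      rw [Finset.card_eq_zero] at hS
      subst hS
      have : (⨅ j ∈ ((∅ : Finset (Fin k))ᶜ : Finset (Fin k)), H j) = ⨅ i, H i := by
        rw [Finset.compl_empty]
        simp
      rw [this, Subgroup.relIndex_self]
      exact ⟨one_ne_zero, Nat.one_le_iff_ne_zero.mpr (Nat.factorial_ne_zero 0)⟩
    | succ n ih =>
      intro S hS
      have hSne : S.Nonempty := Finset.card_pos.mp (hS ▸ n.succ_pos)
      obtain ⟨i₀, hi₀S, hne, hle⟩ := tomkinson_step a H hcover hmin S hSne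
      set D : Subgroup G := ⨅ j ∈ (Sᶜ : Finset (Fin k)), H j with hD
      set S' : Finset (Fin k) := S.erase i₀ with hS'
      have hS'card : S'.card = n := by
        rw [hS', Finset.card_erase_of_mem hi₀S, hS]
        rfl
      have hcomplS' : (S'ᶜ : Finset (Fin k)) = insert i₀ (Sᶜ : Finset (Fin k)) := by
        rw [hS']
        ext j
        simp only [Finset.mem_compl, Finset.mem_erase, Finset.mem_insert]
        by_cases hj : j = i₀ <;> simp [hj]
      set D' : Subgroup G := ⨅ j ∈ (S'ᶜ : Finset (Fin k)), H j with hD'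
      have hD'eq : D' = H i₀ ⊓ D := by
        rw [hD', hcomplS', Finset.iInf_insert, hD]
      obtain ⟨ih1, ih2⟩ := ih S' hS'card
      have hle1 : (⨅ i, H i) ≤ D' := le_iInf₂ fun j _ => iInf_le _ _
      have hle2 : D' ≤ D := by
        rw [hD'eq]; exact inf_le_right
      have hmul : (⨅ i, H i).relIndex D' * D'.relIndex D = (⨅ i, H i).relIndex D :=
        Subgroup.relIndex_mul_relIndex _ _ _ hle1 hle2
      have hD'rel : D'.relIndex D = (H i₀).relIndex D := by
        rw [hD'eq, Subgroup.inf_relIndex_right]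
      constructor
      · rw [← hmul, hD'rel]
        exact Nat.mul_ne_zero ih1 hne
      · rw [← hmul, hD'rel]
        calc (⨅ i, H i).relIndex D' * (H i₀).relIndex D
            ≤ n.factorial * (n + 1) := by
              apply Nat.mul_le_mul ih2
              rw [← hS]; exact hle
          _ = (n + 1).factorial := by
              rw [Nat.factorial_succ, Nat.mul_comm]
  obtain ⟨h1, h2⟩ := main k Finset.univ (by simp)
  have hcompl : ((Finset.univ : Finset (Fin k))ᶜ : Finset (Fin k)) = ∅ := by simp
  rw [hcompl] at h1 h2
  simp only [Finset.notMem_empty, iInf_of_empty, iInf_top] at h1 h2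
  rw [Subgroup.relIndex_top_right] at h1 h2
  exact ⟨h1, h2⟩
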